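/- (Existence of BPR equilibrium under conflicting preferences.) Assume d_A·d_B < 0, d_A² > p, and d_B² > p. Then the digital representative game admits a Nash equilibrium (α_A*, α_B*) with α_A* ∈ (0,1) and α_B* ∈ (0,1), i.e., both members partially reveal information at equilibrium. -/

import Mathlib

set_option maxHeartbeats 1600000


open Set Filter

/-- Team decision formed by the two digital representatives. -/
noncomputable def teamDec (lam : ℝ → ℝ) (thA thB mu : ℝ) (aA aB : ℝ) : ℝ :=
  (lam aA * thA + (1 - lam aA) * mu + lam aB * thB + (1 - lam aB) * mu) / 2

/-- Alice's total loss: preference loss plus communication cost. -/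
noncomputable def lossA (lam c : ℝ → ℝ) (thA thB mu : ℝ) (aA aB : ℝ) : ℝ :=
  (thA - teamDec lam thA thB mu aA aB) ^ 2 + c aA

/-- Bob's total loss: preference loss plus communication cost. -/
noncomputable def lossB (lam c : ℝ → ℝ) (thA thB mu : ℝ) (aA aB : ℝ) : ℝ :=
  (thB - teamDec lam thA thB mu aA aB) ^ 2 + c aB

/-- The function `f_m(α) = λ(α) + (2/d_m²)·c'(α)/λ'(α)`. -/
noncomputable def fFun (lam lam' c' : ℝ → ℝ) (d : ℝ) (α : ℝ) : ℝ :=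
  lam α + (2 / d ^ 2) * (c' α / lam' α)

/-- The function `h_m(α) = 2 − λ(α)·d_{−m}/d_m`. -/
noncomputable def hFun (lam : ℝ → ℝ) (dm dOther : ℝ) (α : ℝ) : ℝ :=
  2 - lam α * dOther / dm

/-- `a` is a best response of Alice to Bob's revelation `aB`:
it minimizes `α ↦ L_A(α, aB)` over `[0,1)`. -/
def IsBestRespA (lam c : ℝ → ℝ) (thA thB mu : ℝ) (a aB : ℝ) : Prop :=
  a ∈ Set.Ico (0:ℝ) 1 ∧
    ∀ x ∈ Set.Ico (0:ℝ) 1, lossA lam c thA thB mu a aB ≤ lossA lam c thA thB mu x aB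

/-- Nash equilibrium of the digital representative game. -/
def IsNashEq (lam c : ℝ → ℝ) (thA thB mu : ℝ) (aA aB : ℝ) : Prop :=
  aA ∈ Set.Ico (0:ℝ) 1 ∧ aB ∈ Set.Ico (0:ℝ) 1 ∧
  (∀ α ∈ Set.Ico (0:ℝ) 1, lossA lam c thA thB mu aA aB ≤ lossA lam c thA thB mu α aB) ∧
  (∀ α ∈ Set.Ico (0:ℝ) 1, lossB lam c thA thB mu aA aB ≤ lossB lam c thA thB mu aA α)

/-- Existence of BPR equilibrium under conflicting preferences. If
`d_A·d_B < 0`, `d_A² > p` and `d_B² > p`, the game admits a Nash equilibrium in which both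
members partially reveal information. -/
lemma lossB_eq (lam c : ℝ → ℝ) (thA thB mu aA aB : ℝ) :
    lossB lam c thA thB mu aA aB = lossA lam c thB thA mu aB aA := by
  unfold lossB lossA teamDec; ring_nf

lemma lossA_hasDeriv (lam lam' c c' : ℝ → ℝ)
    (hlamDeriv : ∀ α ∈ Set.Icc (0:ℝ) 1, HasDerivAt lam (lam' α) α)
    (hcDeriv : ∀ α ∈ Set.Ico (0:ℝ) 1, HasDerivAt c (c' α) α)
    (hlam'pos : ∀ α ∈ Set.Icc (0:ℝ) 1, 0 < lam' α)
    (thA thB mu dA dB : ℝ) (hdA : dA = thA - mu) (hdB : dB = thB - mu)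
    (hdA0 : dA ≠ 0) (b x : ℝ) (hx : x ∈ Set.Ico (0:ℝ) 1) :
    HasDerivAt (fun y => lossA lam c thA thB mu y b)
      (lam' x * (dA ^ 2 / 2) * (fFun lam lam' c' dA x - hFun lam dA dB b)) x := by
  have hx' : x ∈ Set.Icc (0:ℝ) 1 := Ico_subset_Icc_self hx
  have hl : HasDerivAt lam (lam' x) x := hlamDeriv x hx'
  have hc : HasDerivAt c (c' x) x := hcDeriv x hx
  have hl'ne : lam' x ≠ 0 := (hlam'pos x hx').ne'
  have hT : HasDerivAt (fun y => teamDec lam thA thB mu y b)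
      ((lam' x * thA + (0 - lam' x) * mu + 0 + 0) / 2) x := by
    unfold teamDec
    exact ((((hl.mul_const thA).add (((hasDerivAt_const x (1:ℝ)).sub hl).mul_const mu)).add
      (hasDerivAt_const x _)).add (hasDerivAt_const x _)).div_const 2
  have hE : HasDerivAt (fun y => (thA - teamDec lam thA thB mu y b) ^ 2)
      (2 * (thA - teamDec lam thA thB mu x b) ^ 1 *
        (0 - (lam' x * thA + (0 - lam' x) * mu + 0 + 0) / 2)) x :=
    ((hasDerivAt_const x thA).sub hT).pow 2
  have := hE.add hc
  refine this.congr_deriv ?_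
  have hsub : thA - teamDec lam thA thB mu x b
      = dA - (lam x * dA + lam b * dB) / 2 := by
    unfold teamDec
    have h1 : thA = mu + dA := by rw [hdA]; ring
    have h2 : thB = mu + dB := by rw [hdB]; ring
    rw [h1, h2]; ring
  have hthA : thA = mu + dA := by rw [hdA]; ring
  rw [hsub, hthA]
  unfold fFun hFun
  field_simp
  ring

lemma lam_strictMono (lam lam' : ℝ → ℝ)
    (hlamDeriv : ∀ α ∈ Set.Icc (0:ℝ) 1, HasDerivAt lam (lam' α) α)
    (hlam'pos : ∀ α ∈ Set.Icc (0:ℝ) 1, 0 < lam' α) :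
    StrictMonoOn lam (Set.Icc (0:ℝ) 1) := by
  apply strictMonoOn_of_deriv_pos (convex_Icc 0 1)
  · exact fun x hx => (hlamDeriv x hx).continuousAt.continuousWithinAt
  · intro x hx
    rw [interior_Icc] at hx
    rw [(hlamDeriv x (Ioo_subset_Icc_self hx)).deriv]
    exact hlam'pos x (Ioo_subset_Icc_self hx)

lemma fFun_strictMono (lam lam' c' : ℝ → ℝ) (d : ℝ) (hd : d ≠ 0)
    (hlamDeriv : ∀ α ∈ Set.Icc (0:ℝ) 1, HasDerivAt lam (lam' α) α)
    (hlam'pos : ∀ α ∈ Set.Icc (0:ℝ) 1, 0 < lam' α)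
    (hlam'anti : ∀ x ∈ Set.Icc (0:ℝ) 1, ∀ y ∈ Set.Icc (0:ℝ) 1, x ≤ y → lam' y ≤ lam' x)
    (hc'nonneg : ∀ α ∈ Set.Ico (0:ℝ) 1, 0 ≤ c' α)
    (hc'strictMono : ∀ x ∈ Set.Ico (0:ℝ) 1, ∀ y ∈ Set.Ico (0:ℝ) 1, x < y → c' x < c' y) :
    StrictMonoOn (fFun lam lam' c' d) (Set.Ico (0:ℝ) 1) := by
  intro x hx y hy hxy
  have hx' : x ∈ Set.Icc (0:ℝ) 1 := Ico_subset_Icc_self hx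
  have hy' : y ∈ Set.Icc (0:ℝ) 1 := Ico_subset_Icc_self hy
  have h1 : lam x < lam y := lam_strictMono lam lam' hlamDeriv hlam'pos hx' hy' hxy
  have h2 : c' x / lam' x ≤ c' y / lam' y := by
    have hpx := hlam'pos x hx'
    have hpy := hlam'pos y hy'
    have hcle : c' x ≤ c' y := (hc'strictMono x hx y hy hxy).le
    have hcy : 0 ≤ c' y := (hc'nonneg x hx).trans hcle
    exact div_le_div₀ hcy hcle hpy (hlam'anti x hx' y hy' hxy.le)
  have h3 : (0:ℝ) < 2 / d ^ 2 := by positivity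
  unfold fFun
  nlinarith [mul_le_mul_of_nonneg_left h2 h3.le]

lemma exists_crit (lam lam' c' : ℝ → ℝ) (d M t : ℝ)
    (hlamDeriv : ∀ α ∈ Set.Icc (0:ℝ) 1, HasDerivAt lam (lam' α) α)
    (hlam'Cont : ContinuousOn lam' (Set.Icc (0:ℝ) 1))
    (hlam0 : lam 0 = 0)
    (hlam'pos : ∀ α ∈ Set.Icc (0:ℝ) 1, 0 < lam' α)
    (hc'Cont : ContinuousOn c' (Set.Ico (0:ℝ) 1))
    (hc'nonneg : ∀ α ∈ Set.Ico (0:ℝ) 1, 0 ≤ c' α)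
    (hd2 : d ^ 2 > c' 0 / lam' 0)
    (hM : M ∈ Set.Ioo (0:ℝ) 1)
    (hfM : t ≤ fFun lam lam' c' d M) (ht : 2 ≤ t) :
    ∃ a ∈ Set.Ioc 0 M, fFun lam lam' c' d a = t := by
  have h0Icc : (0:ℝ) ∈ Set.Icc (0:ℝ) 1 := by norm_num
  have h0Ico : (0:ℝ) ∈ Set.Ico (0:ℝ) 1 := by norm_num
  have hp0 : 0 ≤ c' 0 / lam' 0 := div_nonneg (hc'nonneg 0 h0Ico) (hlam'pos 0 h0Icc).le
  have hd0 : d ≠ 0 := by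
    intro h; rw [h] at hd2; norm_num at hd2; exact absurd hd2 (not_lt.2 hp0)
  have hdsq : (0:ℝ) < d ^ 2 := by positivity
  have hf0 : fFun lam lam' c' d 0 < 2 := by
    unfold fFun
    rw [hlam0]
    have h1 : (2 / d ^ 2) * (c' 0 / lam' 0) < (2 / d ^ 2) * d ^ 2 :=
      mul_lt_mul_of_pos_left hd2 (by positivity)
    have h2 : (2 / d ^ 2) * d ^ 2 = 2 := by field_simp
    linarith
  have subIcc : Set.Icc (0:ℝ) M ⊆ Set.Icc (0:ℝ) 1 :=
    Set.Icc_subset_Icc le_rfl hM.2.le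
  have subIco : Set.Icc (0:ℝ) M ⊆ Set.Ico (0:ℝ) 1 :=
    fun x hx => ⟨hx.1, lt_of_le_of_lt hx.2 hM.2⟩
  have hcont : ContinuousOn (fFun lam lam' c' d) (Set.Icc 0 M) := by
    apply ContinuousOn.add
    · exact fun x hx => (hlamDeriv x (subIcc hx)).continuousAt.continuousWithinAt
    · exact continuousOn_const.mul ((hc'Cont.mono subIco).div (hlam'Cont.mono subIcc)
        (fun x hx => (hlam'pos x (subIcc hx)).ne'))
  have hIVT := intermediate_value_Icc hM.1.le hcont
  obtain ⟨a, haIcc, hfa⟩ := hIVT ⟨(hf0.trans_le ht).le, hfM⟩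
  refine ⟨a, ⟨?_, haIcc.2⟩, hfa⟩
  rcases lt_or_eq_of_le haIcc.1 with h | h
  · exact h
  · exfalso; rw [← h] at hfa; rw [hfa] at hf0; linarith

lemma bestResp_min (lam lam' c c' : ℝ → ℝ)
    (hlamDeriv : ∀ α ∈ Set.Icc (0:ℝ) 1, HasDerivAt lam (lam' α) α)
    (hlam'pos : ∀ α ∈ Set.Icc (0:ℝ) 1, 0 < lam' α)
    (hlam'anti : ∀ x ∈ Set.Icc (0:ℝ) 1, ∀ y ∈ Set.Icc (0:ℝ) 1, x ≤ y → lam' y ≤ lam' x)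
    (hcDeriv : ∀ α ∈ Set.Ico (0:ℝ) 1, HasDerivAt c (c' α) α)
    (hc'nonneg : ∀ α ∈ Set.Ico (0:ℝ) 1, 0 ≤ c' α)
    (hc'strictMono : ∀ x ∈ Set.Ico (0:ℝ) 1, ∀ y ∈ Set.Ico (0:ℝ) 1, x < y → c' x < c' y)
    (thA thB mu dA dB : ℝ) (hdA : dA = thA - mu) (hdB : dB = thB - mu)
    (hdA0 : dA ≠ 0) (a b : ℝ) (ha : a ∈ Set.Ico (0:ℝ) 1) (hb : b ∈ Set.Ico (0:ℝ) 1)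
    (hcrit : fFun lam lam' c' dA a = hFun lam dA dB b) :
    ∀ x ∈ Set.Ico (0:ℝ) 1, lossA lam c thA thB mu a b ≤ lossA lam c thA thB mu x b := by
  set L : ℝ → ℝ := fun y => lossA lam c thA thB mu y b with hL
  have hderiv : ∀ x ∈ Set.Ico (0:ℝ) 1, HasDerivAt L
      (lam' x * (dA ^ 2 / 2) * (fFun lam lam' c' dA x - hFun lam dA dB b)) x :=
    fun x hx => lossA_hasDeriv lam lam' c c' hlamDeriv hcDeriv hlam'pos
      thA thB mu dA dB hdA hdB hdA0 b x hx
  have hcont : ∀ s ⊆ Set.Ico (0:ℝ) 1, ContinuousOn L s := fun s hs x hx =>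
    ((hderiv x (hs hx)).continuousAt).continuousWithinAt
  have hfmono := fFun_strictMono lam lam' c' dA hdA0 hlamDeriv hlam'pos hlam'anti
    hc'nonneg hc'strictMono
  have hdA2 : (0:ℝ) < dA ^ 2 / 2 := by positivity
  intro x hx
  rcases lt_trichotomy x a with hxa | hxa | hxa
  · -- L strictly anti on [x, a]
    have hsub : Set.Icc x a ⊆ Set.Ico (0:ℝ) 1 :=
      fun t ht => ⟨hx.1.trans ht.1, lt_of_le_of_lt ht.2 ha.2⟩
    have hanti : StrictAntiOn L (Set.Icc x a) := by
      apply strictAntiOn_of_deriv_neg (convex_Icc x a) (hcont _ hsub)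
      intro t ht
      rw [interior_Icc] at ht
      have ht' : t ∈ Set.Ico (0:ℝ) 1 := hsub (Ioo_subset_Icc_self ht)
      rw [(hderiv t ht').deriv]
      have hlt : fFun lam lam' c' dA t < fFun lam lam' c' dA a := hfmono ht' ha ht.2
      rw [hcrit] at hlt
      have hp := hlam'pos t (Ico_subset_Icc_self ht')
      exact mul_neg_of_pos_of_neg (mul_pos hp hdA2) (sub_neg.2 hlt)
    exact (hanti (Set.left_mem_Icc.2 hxa.le) (Set.right_mem_Icc.2 hxa.le) hxa).le
  · exact hxa ▸ le_refl _
  · have hsub : Set.Icc a x ⊆ Set.Ico (0:ℝ) 1 :=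
      fun t ht => ⟨ha.1.trans ht.1, lt_of_le_of_lt ht.2 hx.2⟩
    have hmono : StrictMonoOn L (Set.Icc a x) := by
      apply strictMonoOn_of_deriv_pos (convex_Icc a x) (hcont _ hsub)
      intro t ht
      rw [interior_Icc] at ht
      have ht' : t ∈ Set.Ico (0:ℝ) 1 := hsub (Ioo_subset_Icc_self ht)
      rw [(hderiv t ht').deriv]
      have hlt : fFun lam lam' c' dA a < fFun lam lam' c' dA t := hfmono ha ht' ht.1
      rw [hcrit] at hlt
      have hp := hlam'pos t (Ico_subset_Icc_self ht')
      exact mul_pos (mul_pos hp hdA2) (sub_pos.2 hlt)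
    exact (hmono (Set.left_mem_Icc.2 hxa.le) (Set.right_mem_Icc.2 hxa.le) hxa).le

theorem BPR_equilibrium_exists_conflicting
    (lam lam' c c' : ℝ → ℝ)
    (hlamDeriv : ∀ α ∈ Set.Icc (0:ℝ) 1, HasDerivAt lam (lam' α) α)
    (hlam'Cont : ContinuousOn lam' (Set.Icc (0:ℝ) 1))
    (hlam0 : lam 0 = 0) (hlam1 : lam 1 = 1)
    (hlam'pos : ∀ α ∈ Set.Icc (0:ℝ) 1, 0 < lam' α)
    (hlam'anti : ∀ x ∈ Set.Icc (0:ℝ) 1, ∀ y ∈ Set.Icc (0:ℝ) 1, x ≤ y → lam' y ≤ lam' x)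
    (hcDeriv : ∀ α ∈ Set.Ico (0:ℝ) 1, HasDerivAt c (c' α) α)
    (hc'Cont : ContinuousOn c' (Set.Ico (0:ℝ) 1))
    (hc0 : c 0 = 0)
    (hc'nonneg : ∀ α ∈ Set.Ico (0:ℝ) 1, 0 ≤ c' α)
    (hc'strictMono : ∀ x ∈ Set.Ico (0:ℝ) 1, ∀ y ∈ Set.Ico (0:ℝ) 1, x < y → c' x < c' y)
    (hc'top : Filter.Tendsto c' (nhdsWithin 1 (Set.Iio 1)) Filter.atTop)
    (thA thB muG dA dB : ℝ)
    (hdA : dA = thA - muG) (hdB : dB = thB - muG)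
    (hconf : dA * dB < 0)
    (hpA : dA ^ 2 > c' 0 / lam' 0) (hpB : dB ^ 2 > c' 0 / lam' 0) :
    ∃ aA aB : ℝ, aA ∈ Set.Ioo (0:ℝ) 1 ∧ aB ∈ Set.Ioo (0:ℝ) 1 ∧
      IsNashEq lam c thA thB muG aA aB := by
  -- basic sign facts
  have hdA0 : dA ≠ 0 := fun h => by simp [h] at hconf
  have hdB0 : dB ≠ 0 := fun h => by simp [h] at hconf
  have hdsqA : (0:ℝ) < dA ^ 2 := by positivity
  have hdsqB : (0:ℝ) < dB ^ 2 := by positivity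
  set RA : ℝ := -(dB / dA) with hRAdef
  set RB : ℝ := -(dA / dB) with hRBdef
  have hRA : 0 < RA := by
    have h1 : dB / dA = dA * dB / dA ^ 2 := by rw [sq, mul_div_mul_left _ _ hdA0]
    have h2 : dA * dB / dA ^ 2 < 0 := div_neg_of_neg_of_pos hconf hdsqA
    rw [hRAdef, h1]; linarith
  have hRB : 0 < RB := by
    have h1 : dA / dB = dB * dA / dB ^ 2 := by rw [sq, mul_div_mul_left _ _ hdB0]
    have h2 : dB * dA / dB ^ 2 < 0 := div_neg_of_neg_of_pos (by linarith [hconf] : dB * dA < 0) hdsqB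
    rw [hRBdef, h1]; linarith
  -- lambda monotone facts
  have hlamMono : MonotoneOn lam (Set.Icc (0:ℝ) 1) :=
    (lam_strictMono lam lam' hlamDeriv hlam'pos).monotoneOn
  have hlamMem : ∀ y ∈ Set.Icc (0:ℝ) 1, lam y ∈ Set.Icc (0:ℝ) 1 := by
    intro y hy
    constructor
    · rw [← hlam0]; exact hlamMono (by norm_num) hy hy.1
    · rw [← hlam1]; exact hlamMono hy (by norm_num) hy.2
  -- choose M
  have hl0pos : 0 < lam' 0 := hlam'pos 0 (by norm_num)
  set K : ℝ := lam' 0 * (dA ^ 2 * (2 + RA) + dB ^ 2 * (2 + RB)) with hKdef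
  have hKposA : lam' 0 * (dA ^ 2 * (2 + RA)) ≤ K := by
    rw [hKdef]
    have : 0 < dB ^ 2 * (2 + RB) := mul_pos hdsqB (by linarith)
    nlinarith
  have hKposB : lam' 0 * (dB ^ 2 * (2 + RB)) ≤ K := by
    rw [hKdef]
    have : 0 < dA ^ 2 * (2 + RA) := mul_pos hdsqA (by linarith)
    nlinarith
  obtain ⟨M, hKM, hM⟩ : ∃ M, K ≤ c' M ∧ M ∈ Set.Ioo (0:ℝ) 1 := by
    have ev1 : ∀ᶠ x in nhdsWithin 1 (Set.Iio 1), K ≤ c' x :=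
      hc'top.eventually (eventually_ge_atTop K)
    have ev2 : Set.Ioo (0:ℝ) 1 ∈ nhdsWithin 1 (Set.Iio 1) :=
      Ioo_mem_nhdsLT_of_mem (by norm_num : (1:ℝ) ∈ Set.Ioc 0 1)
    exact (ev1.and (eventually_of_mem ev2 (fun x hx => hx))).exists
  have hMIcc : M ∈ Set.Icc (0:ℝ) 1 := ⟨hM.1.le, hM.2.le⟩
  -- bound on fFun at M
  have hbound : ∀ d R, d ≠ 0 → 0 < R → lam' 0 * (d ^ 2 * (2 + R)) ≤ K →
      2 + R ≤ fFun lam lam' c' d M := by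
    intro d R hd0 hR hKd
    have hdsq : (0:ℝ) < d ^ 2 := by positivity
    have hlM : 0 < lam' M := hlam'pos M hMIcc
    have hlMle : lam' M ≤ lam' 0 := hlam'anti 0 (by norm_num) M hMIcc hM.1.le
    have hKpos : 0 < K := lt_of_lt_of_le (by positivity) hKd |>.trans_le le_rfl
    have h1 : K / lam' 0 ≤ c' M / lam' M :=
      div_le_div₀ ((hKpos.le).trans hKM) hKM hlM hlMle
    have h2 : d ^ 2 * (2 + R) ≤ K / lam' 0 := by
      rw [le_div_iff₀ hl0pos]
      linarith [hKd]
    have h3 : d ^ 2 * (2 + R) ≤ c' M / lam' M := h2.trans h1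
    have h4 : (2 / d ^ 2) * (d ^ 2 * (2 + R)) ≤ (2 / d ^ 2) * (c' M / lam' M) :=
      mul_le_mul_of_nonneg_left h3 (by positivity)
    have h5 : (2 / d ^ 2) * (d ^ 2 * (2 + R)) = 2 * (2 + R) := by field_simp
    have h6 : 0 ≤ lam M := (hlamMem M hMIcc).1
    unfold fFun
    nlinarith
  have hfMA : 2 + RA ≤ fFun lam lam' c' dA M := hbound dA RA hdA0 hRA hKposA
  have hfMB : 2 + RB ≤ fFun lam lam' c' dB M := hbound dB RB hdB0 hRB hKposB
  -- projection onto [0, M]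
  set proj : ℝ → ℝ := fun y => max 0 (min y M) with hprojdef
  have hprojmem : ∀ y, proj y ∈ Set.Icc (0:ℝ) M := by
    intro y
    constructor
    · exact le_max_left _ _
    · exact max_le hM.1.le (min_le_right _ _)
  have hprojid : ∀ y ∈ Set.Icc (0:ℝ) M, proj y = y := by
    intro y hy
    rw [hprojdef]
    simp only [min_eq_left hy.2, max_eq_right hy.1]
  have hprojmono : Monotone proj := fun x y hxy =>
    max_le_max le_rfl (min_le_min hxy le_rfl)
  have hIccsub : Set.Icc (0:ℝ) M ⊆ Set.Icc (0:ℝ) 1 := Set.Icc_subset_Icc le_rfl hM.2.le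
  -- target bounds
  have htargetA : ∀ y, 2 ≤ hFun lam dA dB (proj y) ∧ hFun lam dA dB (proj y) ≤ 2 + RA := by
    intro y
    have hmem := hlamMem (proj y) (hIccsub (hprojmem y))
    have heq : hFun lam dA dB (proj y) = 2 + lam (proj y) * RA := by
      unfold hFun; rw [hRAdef]; field_simp; ring
    rw [heq]
    constructor
    · nlinarith [hmem.1, hRA]
    · nlinarith [hmem.2, hRA, hmem.1]
  have htargetB : ∀ y, 2 ≤ hFun lam dB dA (proj y) ∧ hFun lam dB dA (proj y) ≤ 2 + RB := by
    intro y
    have hmem := hlamMem (proj y) (hIccsub (hprojmem y))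
    have heq : hFun lam dB dA (proj y) = 2 + lam (proj y) * RB := by
      unfold hFun; rw [hRBdef]; field_simp; ring
    rw [heq]
    constructor
    · nlinarith [hmem.1, hRB]
    · nlinarith [hmem.2, hRB, hmem.1]
  -- best responses
  have exA : ∀ b : ℝ, ∃ a ∈ Set.Ioc 0 M, fFun lam lam' c' dA a = hFun lam dA dB (proj b) := by
    intro b
    exact exists_crit lam lam' c' dA M (hFun lam dA dB (proj b)) hlamDeriv hlam'Cont hlam0 hlam'pos hc'Cont
      hc'nonneg hpA hM ((htargetA b).2.trans hfMA) (htargetA b).1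
  have exB : ∀ a : ℝ, ∃ b ∈ Set.Ioc 0 M, fFun lam lam' c' dB b = hFun lam dB dA (proj a) := by
    intro a
    exact exists_crit lam lam' c' dB M (hFun lam dB dA (proj a)) hlamDeriv hlam'Cont hlam0 hlam'pos hc'Cont
      hc'nonneg hpB hM ((htargetB a).2.trans hfMB) (htargetB a).1
  choose BRA hBRAmem hBRAeq using exA
  choose BRB hBRBmem hBRBeq using exB
  have hIocIco : Set.Ioc (0:ℝ) M ⊆ Set.Ico (0:ℝ) 1 :=
    fun x hx => ⟨hx.1.le, lt_of_le_of_lt hx.2 hM.2⟩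
  have hfAmono := fFun_strictMono lam lam' c' dA hdA0 hlamDeriv hlam'pos hlam'anti
    hc'nonneg hc'strictMono
  have hfBmono := fFun_strictMono lam lam' c' dB hdB0 hlamDeriv hlam'pos hlam'anti
    hc'nonneg hc'strictMono
  -- monotonicity of best responses
  have hBRAmono : Monotone BRA := by
    intro b1 b2 hb
    by_contra h
    push_neg at h
    have hlt := hfAmono (hIocIco (hBRAmem b2)) (hIocIco (hBRAmem b1)) h
    rw [hBRAeq b1, hBRAeq b2] at hlt
    have hlamle : lam (proj b1) ≤ lam (proj b2) :=
      hlamMono (hIccsub (hprojmem b1)) (hIccsub (hprojmem b2)) (hprojmono hb)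
    unfold hFun at hlt
    have hq : dB / dA < 0 := by rw [hRAdef] at hRA; linarith
    have h3 : lam (proj b2) * (dB / dA) ≤ lam (proj b1) * (dB / dA) :=
      mul_le_mul_of_nonpos_right hlamle hq.le
    rw [← mul_div_assoc, ← mul_div_assoc] at h3
    linarith
  have hBRBmono : Monotone BRB := by
    intro b1 b2 hb
    by_contra h
    push_neg at h
    have hlt := hfBmono (hIocIco (hBRBmem b2)) (hIocIco (hBRBmem b1)) h
    rw [hBRBeq b1, hBRBeq b2] at hlt
    have hlamle : lam (proj b1) ≤ lam (proj b2) :=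
      hlamMono (hIccsub (hprojmem b1)) (hIccsub (hprojmem b2)) (hprojmono hb)
    unfold hFun at hlt
    have hq : dA / dB < 0 := by rw [hRBdef] at hRB; linarith
    have h3 : lam (proj b2) * (dA / dB) ≤ lam (proj b1) * (dA / dB) :=
      mul_le_mul_of_nonpos_right hlamle hq.le
    rw [← mul_div_assoc, ← mul_div_assoc] at h3
    linarith
  -- Knaster–Tarski style fixed point of T := BRA ∘ BRB on [0, M]
  set T : ℝ → ℝ := fun a => BRA (BRB a) with hTdef
  have hTmono : Monotone T := fun x y h => hBRAmono (hBRBmono h)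
  have hTmem : ∀ a, T a ∈ Set.Ioc 0 M := fun a => hBRAmem (BRB a)
  set S : Set ℝ := {a | a ∈ Set.Icc (0:ℝ) M ∧ a ≤ T a} with hSdef
  have hS0 : (0:ℝ) ∈ S := ⟨⟨le_rfl, hM.1.le⟩, (hTmem 0).1.le⟩
  have hSne : S.Nonempty := ⟨0, hS0⟩
  have hSbdd : BddAbove S := ⟨M, fun a ha => ha.1.2⟩
  set astar : ℝ := sSup S with hastardef
  have hstarIcc : astar ∈ Set.Icc (0:ℝ) M :=
    ⟨le_csSup hSbdd hS0, csSup_le hSne (fun a ha => ha.1.2)⟩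
  have h1 : astar ≤ T astar := by
    apply csSup_le hSne
    intro a ha
    exact ha.2.trans (hTmono (le_csSup hSbdd ha))
  have h2 : T astar ∈ S := ⟨⟨(hTmem astar).1.le, (hTmem astar).2⟩, hTmono h1⟩
  have hfix : T astar = astar := le_antisymm (le_csSup hSbdd h2) h1
  -- the equilibrium
  set aB : ℝ := BRB astar with haBdef
  have haBmem : aB ∈ Set.Ioc 0 M := hBRBmem astar
  have haAmem : astar ∈ Set.Ioc 0 M := by rw [← hfix]; exact hTmem astar
  have hcritA : fFun lam lam' c' dA astar = hFun lam dA dB aB := by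
    have := hBRAeq aB
    rw [hprojid aB ⟨haBmem.1.le, haBmem.2⟩] at this
    rw [← hfix]
    exact this
  have hcritB : fFun lam lam' c' dB aB = hFun lam dB dA astar := by
    have := hBRBeq astar
    rw [hprojid astar hstarIcc] at this
    exact this
  refine ⟨astar, aB, ⟨haAmem.1, lt_of_le_of_lt haAmem.2 hM.2⟩,
    ⟨haBmem.1, lt_of_le_of_lt haBmem.2 hM.2⟩,
    ⟨⟨haAmem.1.le, lt_of_le_of_lt haAmem.2 hM.2⟩,
     ⟨haBmem.1.le, lt_of_le_of_lt haBmem.2 hM.2⟩, ?_, ?_⟩⟩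
  · exact bestResp_min lam lam' c c' hlamDeriv hlam'pos hlam'anti hcDeriv hc'nonneg
      hc'strictMono thA thB muG dA dB hdA hdB hdA0 astar aB
      (hIocIco haAmem) (hIocIco haBmem) hcritA
  · intro α hα
    rw [lossB_eq, lossB_eq]
    exact bestResp_min lam lam' c c' hlamDeriv hlam'pos hlam'anti hcDeriv hc'nonneg
      hc'strictMono thB thA muG dB dA hdB hdA hdB0 aB astar
      (hIocIco haBmem) (hIocIco haAmem) hcritB α hα
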